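/- Let M be a complete pointed metric space and p ≠ q ∈ M with metric segment [p,q] = {p,q}. Then the molecule m_{pq} = (δ(p) - δ(q))/d(p,q) is an exposed point of the closed unit ball of F(M): the function f_{pq}(t) = (d(p,q)/2)·((d(t,q)-d(t,p))/(d(t,q)+d(t,p)) - (d(0,q)-d(0,p))/(d(0,q)+d(0,p))) ∈ Lip₀(M) has norm 1, satisfies ⟨m_{pq}, f_{pq}⟩ = 1, and ⟨μ, f_{pq}⟩ < 1 for every μ in the closed unit ball of F(M) with μ ≠ m_{pq}. -/

import Mathlib

noncomputable section

open Metric Set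

/-- The space of real-valued Lipschitz functions on `M` vanishing at `base`. -/
structure Lip0 (M : Type*) [MetricSpace M] (base : M) where
  toFun : M → ℝ
  exists_lip' : ∃ K, LipschitzWith K toFun
  map_base' : toFun base = 0

namespace Lip0

variable {M : Type*} [MetricSpace M] {base : M}

instance : FunLike (Lip0 M base) M ℝ where
  coe := toFun
  coe_injective := by rintro ⟨f, _, _⟩ ⟨g, _, _⟩ h; simpa using h

@[simp] lemma map_base (f : Lip0 M base) : f base = 0 := f.map_base'

/-- The set of (nonnegative real) Lipschitz constants of `f`. -/
def lipSet (f : Lip0 M base) : Set ℝ :=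
  {K | 0 ≤ K ∧ ∀ x y, |f x - f y| ≤ K * dist x y}

lemma lipSet_nonempty (f : Lip0 M base) : (lipSet f).Nonempty := by
  obtain ⟨K, hK⟩ := f.exists_lip'
  exact ⟨K, K.coe_nonneg, fun x y => by
    have h := hK.dist_le_mul x y; rw [Real.dist_eq] at h; exact h⟩

lemma lipSet_bddBelow (f : Lip0 M base) : BddBelow (lipSet f) :=
  ⟨0, fun K hK => hK.1⟩

lemma sInf_mem_lipSet (f : Lip0 M base) : sInf (lipSet f) ∈ lipSet f := by
  constructor
  · exact le_csInf (lipSet_nonempty f) fun K hK => hK.1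
  · intro x y
    rcases eq_or_ne x y with rfl | hxy
    · simp
    · have hd : 0 < dist x y := dist_pos.2 hxy
      rw [← div_le_iff₀ hd]
      exact le_csInf (lipSet_nonempty f) fun K hK => (div_le_iff₀ hd).2 (hK.2 x y)

instance : Zero (Lip0 M base) :=
  ⟨⟨fun _ => 0, ⟨0, LipschitzWith.const 0⟩, rfl⟩⟩

instance : Add (Lip0 M base) :=
  ⟨fun f g => ⟨fun t => f t + g t, by
    obtain ⟨Kf, hf⟩ := f.exists_lip'; obtain ⟨Kg, hg⟩ := g.exists_lip'
    exact ⟨Kf + Kg, hf.add hg⟩, by simp⟩⟩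

instance : Neg (Lip0 M base) :=
  ⟨fun f => ⟨fun t => -f t, by
    obtain ⟨Kf, hf⟩ := f.exists_lip'
    exact ⟨Kf, hf.neg⟩, by simp⟩⟩

def rsmul (c : ℝ) (f : Lip0 M base) : Lip0 M base :=
  ⟨fun t => c * f t, by
    obtain ⟨Kf, hf⟩ := f.exists_lip'
    refine ⟨⟨|c|, abs_nonneg c⟩ * Kf, LipschitzWith.of_dist_le_mul fun x y => ?_⟩
    have h1 : dist (c * f x) (c * f y) = |c| * |f x - f y| := by
      rw [Real.dist_eq, ← abs_mul, mul_sub]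
    have h2 := hf.dist_le_mul x y
    rw [Real.dist_eq] at h2
    rw [h1]
    calc |c| * |f x - f y| ≤ |c| * (Kf * dist x y) :=
          mul_le_mul_of_nonneg_left h2 (abs_nonneg c)
      _ = (⟨|c|, abs_nonneg c⟩ * Kf : NNReal) * dist x y := by show |c| * ((Kf : ℝ) * dist x y) = (|c| * (Kf : ℝ)) * dist x y; ring, by simp⟩

instance : SMul ℝ (Lip0 M base) := ⟨rsmul⟩
instance : SMul ℕ (Lip0 M base) := ⟨fun n => rsmul (n : ℝ)⟩
instance : SMul ℤ (Lip0 M base) := ⟨fun n => rsmul (n : ℝ)⟩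
instance : Sub (Lip0 M base) := ⟨fun f g => f + -g⟩

@[simp] lemma coe_zero : ⇑(0 : Lip0 M base) = fun _ => 0 := rfl
@[simp] lemma coe_add (f g : Lip0 M base) : ⇑(f + g) = fun t => f t + g t := rfl
@[simp] lemma coe_neg (f : Lip0 M base) : ⇑(-f) = fun t => -f t := rfl
@[simp] lemma coe_smul (c : ℝ) (f : Lip0 M base) : ⇑(c • f) = fun t => c * f t := rfl
@[simp] lemma coe_sub (f g : Lip0 M base) : ⇑(f - g) = fun t => f t - g t := by
  show (fun t => f t + -(g t)) = _
  funext t; ring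

instance : AddCommGroup (Lip0 M base) :=
  (DFunLike.coe_injective (F := Lip0 M base)).addCommGroup _
    rfl (fun _ _ => rfl) (fun _ => rfl) (fun f g => coe_sub f g)
    (fun f n => by funext t; show (n : ℝ) * f t = n • f t; simp)
    (fun f n => by funext t; show (n : ℝ) * f t = n • f t; simp)

instance : Module ℝ (Lip0 M base) :=
  (DFunLike.coe_injective (F := Lip0 M base)).module ℝ
    { toFun := fun f : Lip0 M base => ⇑f, map_zero' := rfl, map_add' := fun _ _ => rfl }
    (fun _ _ => rfl)

lemma lipSet_neg (f : Lip0 M base) : lipSet (-f) = lipSet f := by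
  unfold lipSet
  ext K
  have e : ∀ x y : M, (-f) x - (-f) y = -(f x - f y) := fun x y => by
    show -f x - -f y = -(f x - f y); ring
  constructor <;> rintro ⟨h0, h⟩ <;> refine ⟨h0, fun x y => ?_⟩
  · have := h x y; rwa [e, abs_neg] at this
  · rw [e, abs_neg]; exact h x y

instance : NormedAddCommGroup (Lip0 M base) :=
  AddGroupNorm.toNormedAddCommGroup
  { toFun := fun f => sInf (lipSet f)
    map_zero' := by
      apply le_antisymm
      · exact csInf_le (lipSet_bddBelow _) ⟨le_refl 0, fun x y => by simp⟩
      · exact (sInf_mem_lipSet (0 : Lip0 M base)).1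
    add_le' := fun f g => by
      apply csInf_le (lipSet_bddBelow _)
      refine ⟨add_nonneg (sInf_mem_lipSet f).1 (sInf_mem_lipSet g).1, fun x y => ?_⟩
      have hf := (sInf_mem_lipSet f).2 x y
      have hg := (sInf_mem_lipSet g).2 x y
      calc |(f + g) x - (f + g) y| = |(f x - f y) + (g x - g y)| := by
            simp [coe_add]; ring_nf
        _ ≤ |f x - f y| + |g x - g y| := abs_add_le _ _
        _ ≤ sInf (lipSet f) * dist x y + sInf (lipSet g) * dist x y := add_le_add hf hg
        _ = (sInf (lipSet f) + sInf (lipSet g)) * dist x y := by ring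
    neg' := fun f => by show sInf (lipSet (-f)) = sInf (lipSet f); rw [lipSet_neg]
    eq_zero_of_map_eq_zero' := fun f hf => by
      have hf' : sInf (lipSet f) = 0 := hf
      apply DFunLike.coe_injective
      funext t
      have h := (sInf_mem_lipSet f).2 t base
      rw [hf', zero_mul] at h
      have h0 : f t - f base = 0 := abs_nonpos_iff.1 h
      show f t = (0 : Lip0 M base) t
      have : (0 : Lip0 M base) t = 0 := rfl
      rw [this]
      simpa using h0 }

lemma norm_def (f : Lip0 M base) : ‖f‖ = sInf (lipSet f) := rfl

instance : NormedSpace ℝ (Lip0 M base) where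
  norm_smul_le c f := by
    rw [norm_def, norm_def, Real.norm_eq_abs]
    apply csInf_le (lipSet_bddBelow _)
    refine ⟨mul_nonneg (abs_nonneg c) (sInf_mem_lipSet f).1, fun x y => ?_⟩
    have hf := (sInf_mem_lipSet f).2 x y
    calc |(c • f) x - (c • f) y| = |c| * |f x - f y| := by
          rw [coe_smul]; rw [← abs_mul]; ring_nf
      _ ≤ |c| * (sInf (lipSet f) * dist x y) :=
          mul_le_mul_of_nonneg_left hf (abs_nonneg c)
      _ = |c| * sInf (lipSet f) * dist x y := by ring

lemma norm_apply_le (f : Lip0 M base) (x y : M) : |f x - f y| ≤ ‖f‖ * dist x y :=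
  (sInf_mem_lipSet f).2 x y

end Lip0

open Lip0 NormedSpace

variable (M : Type*) [MetricSpace M]

/-- The Dirac evaluation functional at `x`. -/
def deltaF (base x : M) : StrongDual ℝ (Lip0 M base) :=
  LinearMap.mkContinuous
    { toFun := fun f => f x
      map_add' := fun _ _ => rfl
      map_smul' := fun _ _ => rfl }
    (dist x base)
    (fun f => by
      have h := Lip0.norm_apply_le f x base
      simp only [Lip0.map_base, sub_zero] at h
      show ‖f x‖ ≤ _; simpa [Real.norm_eq_abs, mul_comm] using h)

variable {M}

@[simp] lemma deltaF_apply (base x : M) (f : Lip0 M base) : deltaF M base x f = f x := rfl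

/-- The molecule `(δ x - δ y)/d(x,y)`. -/
def molecule (base x y : M) : StrongDual ℝ (Lip0 M base) :=
  (dist x y)⁻¹ • (deltaF M base x - deltaF M base y)

variable (M) in
/-- The Lipschitz-free space over `M`, realized as the closed linear span of the Dirac
evaluations inside the dual of `Lip0 M base`. -/
def FreeSpace (base : M) : Submodule ℝ (StrongDual ℝ (Lip0 M base)) :=
  (Submodule.span ℝ (Set.range (deltaF M base))).topologicalClosure

variable (M) in
/-- The subspace of the free space generated by the Diracs of a subset `S ⊆ M`. -/
def FreeSpaceOn (base : M) (S : Set M) : Submodule ℝ (StrongDual ℝ (Lip0 M base)) :=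
  (Submodule.span ℝ (deltaF M base '' S)).topologicalClosure

lemma deltaF_mem (base x : M) : deltaF M base x ∈ FreeSpace M base :=
  Submodule.le_topologicalClosure _ (Submodule.subset_span ⟨x, rfl⟩)

lemma molecule_mem (base x y : M) : molecule base x y ∈ FreeSpace M base :=
  Submodule.smul_mem _ _ (Submodule.sub_mem _ (deltaF_mem base x) (deltaF_mem base y))

/-- The molecule as an element of the free space. -/
def mol (base x y : M) : ↥(FreeSpace M base) := ⟨molecule base x y, molecule_mem base x y⟩

/-- The "magic function" of Ivakhno, Kadets and Werner associated to the pair `(p, q)`,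
with base point `o`. -/
def magicFun (o p q : M) (t : M) : ℝ :=
  (dist p q / 2) *
    ((dist t q - dist t p) / (dist t q + dist t p) -
      (dist o q - dist o p) / (dist o q + dist o p))



/-! ### Auxiliary development for `stmt_14` -/

section Stmt14Aux

variable {M : Type*} [MetricSpace M]

/-- clamp to [0,1] -/
def clamp01 (t : ℝ) : ℝ := min (max t 0) 1

lemma clamp01_nonneg (t : ℝ) : 0 ≤ clamp01 t := by
  unfold clamp01; rcases le_total (max t 0) 1 with h | h <;> simp [min_def, h, le_max_right]

lemma clamp01_le_one (t : ℝ) : clamp01 t ≤ 1 := min_le_right _ _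

lemma clamp01_abs_le_one (t : ℝ) : |clamp01 t| ≤ 1 := by
  rw [abs_le]; exact ⟨by linarith [clamp01_nonneg t], clamp01_le_one t⟩

lemma abs_min_sub_min_c (a b c : ℝ) : |min a c - min b c| ≤ |a - b| := by
  have h1 := le_abs_self (a - b)
  have h2 := neg_abs_le (a - b)
  rcases le_total a c with hac | hac <;> rcases le_total b c with hbc | hbc <;>
    rw [abs_sub_le_iff] <;> constructor <;>
    simp only [min_eq_left, min_eq_right, hac, hbc] <;> linarith

lemma abs_max_sub_max_c (a b c : ℝ) : |max a c - max b c| ≤ |a - b| := by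
  have h1 := le_abs_self (a - b)
  have h2 := neg_abs_le (a - b)
  rcases le_total a c with hac | hac <;> rcases le_total b c with hbc | hbc <;>
    rw [abs_sub_le_iff] <;> constructor <;>
    simp only [max_eq_left, max_eq_right, hac, hbc] <;> linarith

lemma clamp01_lip (a b : ℝ) : |clamp01 a - clamp01 b| ≤ |a - b| := by
  unfold clamp01
  exact le_trans (abs_min_sub_min_c _ _ 1) (abs_max_sub_max_c a b 0)

lemma clamp01_of_nonpos {t : ℝ} (h : t ≤ 0) : clamp01 t = 0 := by
  unfold clamp01; rw [max_eq_right h]; exact min_eq_left zero_le_one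

lemma clamp01_of_one_le {t : ℝ} (h : 1 ≤ t) : clamp01 t = 1 := by
  unfold clamp01
  rw [max_eq_left (le_trans zero_le_one h), min_eq_right h]

/-- The excess function `E(z) = d(z,p)+d(z,q)-d(p,q)`. -/
def Ee (p q z : M) : ℝ := dist z p + dist z q - dist p q

lemma Ee_nonneg (p q z : M) : 0 ≤ Ee p q z := by
  have h := dist_triangle p z q
  unfold Ee
  have h1 : dist p z = dist z p := dist_comm p z
  linarith

lemma Ee_lip (p q x y : M) : |Ee p q x - Ee p q y| ≤ 2 * dist x y := by
  have h1 : |dist x p - dist y p| ≤ dist x y := abs_dist_sub_le x y p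
  have h2 : |dist x q - dist y q| ≤ dist x y := abs_dist_sub_le x y q
  unfold Ee
  have : dist x p + dist x q - dist p q - (dist y p + dist y q - dist p q)
      = (dist x p - dist y p) + (dist x q - dist y q) := by ring
  rw [this]
  calc |(dist x p - dist y p) + (dist x q - dist y q)|
      ≤ |dist x p - dist y p| + |dist x q - dist y q| := abs_add_le _ _
    _ ≤ 2 * dist x y := by linarith

lemma Ee_p (p q : M) : Ee p q p = 0 := by simp [Ee, dist_comm]

lemma Ee_q (p q : M) : Ee p q q = 0 := by simp [Ee, dist_comm]

lemma Ee_continuous (p q : M) : Continuous (Ee p q) := by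
  unfold Ee; fun_prop

/-- From the segment hypothesis: zero excess means `z ∈ {p,q}`. -/
lemma Ee_eq_zero_iff {p q : M} (hseg : {z : M | dist p q = dist z p + dist z q} = {p, q})
    {z : M} (h : Ee p q z = 0) : z = p ∨ z = q := by
  have hz : z ∈ ({z : M | dist p q = dist z p + dist z q} : Set M) := by
    simp only [Set.mem_setOf_eq]; unfold Ee at h; linarith
  rw [hseg] at hz
  simpa using hz

end Stmt14Aux

section Stmt14MagicAux

variable {M : Type*} [MetricSpace M]

lemma lip0_norm_le {base : M} (h : Lip0 M base) {K : ℝ} (h0 : 0 ≤ K)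
    (H : ∀ x y, |h x - h y| ≤ K * dist x y) : ‖h‖ ≤ K :=
  csInf_le (Lip0.lipSet_bddBelow h) ⟨h0, H⟩

variable {o p q : M}

lemma dist_le_D (p q x : M) : dist p q ≤ dist x p + dist x q := by
  have := dist_triangle p x q; rw [dist_comm p x] at this; linarith

lemma D_pos (hpq : p ≠ q) (x : M) : 0 < dist x p + dist x q :=
  lt_of_lt_of_le (dist_pos.2 hpq) (dist_le_D p q x)

lemma g_diff {g : Lip0 M o} (hpq : p ≠ q) (hg : ∀ t, g t = magicFun o p q t) (x y : M) :
    g x - g y = dist p q * (dist x q * dist y p - dist x p * dist y q) /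
      ((dist x p + dist x q) * (dist y p + dist y q)) := by
  have hDx := D_pos hpq x
  have hDy := D_pos hpq y
  have hDo := D_pos hpq o
  rw [hg x, hg y]
  unfold magicFun
  have hx : dist x q + dist x p ≠ 0 := by linarith
  have hy : dist y q + dist y p ≠ 0 := by linarith
  have ho : dist o q + dist o p ≠ 0 := by linarith
  have hx' : dist x p + dist x q ≠ 0 := by linarith
  have hy' : dist y p + dist y q ≠ 0 := by linarith
  field_simp
  ring

lemma num_le1 (p q x y : M) : dist x q * dist y p - dist x p * dist y q ≤
    dist x y * (dist y p + dist y q) := by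
  have h1 : 0 ≤ dist y p * (dist x y + dist y q - dist x q) :=
    mul_nonneg dist_nonneg (by linarith [dist_triangle x y q])
  have h2 : 0 ≤ dist y q * (dist x y + dist x p - dist y p) :=
    mul_nonneg dist_nonneg (by
      have := dist_triangle y x p; rw [dist_comm y x] at this; linarith)
  nlinarith [h1, h2]

lemma num_le2 (p q x y : M) : dist x q * dist y p - dist x p * dist y q ≤
    dist x y * (dist x p + dist x q) := by
  have h1 : 0 ≤ dist x q * (dist x y + dist x p - dist y p) :=
    mul_nonneg dist_nonneg (by
      have := dist_triangle y x p; rw [dist_comm y x] at this; linarith)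
  have h2 : 0 ≤ dist x p * (dist x y + dist y q - dist x q) :=
    mul_nonneg dist_nonneg (by linarith [dist_triangle x y q])
  nlinarith [h1, h2]

lemma g_sub_le_x {g : Lip0 M o} (hpq : p ≠ q) (hg : ∀ t, g t = magicFun o p q t) (x y : M) :
    g x - g y ≤ dist x y * dist p q / (dist x p + dist x q) := by
  have hDx := D_pos hpq x
  have hDy := D_pos hpq y
  have hd0 : (0:ℝ) < dist p q := dist_pos.2 hpq
  rw [g_diff hpq hg x y, div_le_div_iff₀ (by positivity) hDx]
  nlinarith [mul_le_mul_of_nonneg_left (num_le1 p q x y)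
    (le_of_lt (mul_pos hd0 hDx))]

lemma g_sub_le_y {g : Lip0 M o} (hpq : p ≠ q) (hg : ∀ t, g t = magicFun o p q t) (x y : M) :
    g x - g y ≤ dist x y * dist p q / (dist y p + dist y q) := by
  have hDx := D_pos hpq x
  have hDy := D_pos hpq y
  have hd0 : (0:ℝ) < dist p q := dist_pos.2 hpq
  rw [g_diff hpq hg x y, div_le_div_iff₀ (by positivity) hDy]
  nlinarith [mul_le_mul_of_nonneg_left (num_le2 p q x y)
    (le_of_lt (mul_pos hd0 hDy))]

lemma g_abs_le_x {g : Lip0 M o} (hpq : p ≠ q) (hg : ∀ t, g t = magicFun o p q t) (x y : M) :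
    |g x - g y| ≤ dist x y * dist p q / (dist x p + dist x q) := by
  rw [abs_sub_le_iff]
  refine ⟨g_sub_le_x hpq hg x y, ?_⟩
  have := g_sub_le_y hpq hg y x
  rwa [dist_comm y x] at this

lemma g_lip {g : Lip0 M o} (hpq : p ≠ q) (hg : ∀ t, g t = magicFun o p q t) (x y : M) :
    |g x - g y| ≤ dist x y := by
  have hDx := D_pos hpq x
  refine le_trans (g_abs_le_x hpq hg x y) ?_
  rw [div_le_iff₀ hDx]
  have h := dist_le_D p q x
  nlinarith [dist_nonneg (x := x) (y := y)]

lemma g_gap {g : Lip0 M o} (hpq : p ≠ q) (hg : ∀ t, g t = magicFun o p q t)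
    {δ : ℝ} (hδ : 0 < δ) {x y : M} (h : δ ≤ Ee p q x ∨ δ ≤ Ee p q y) :
    |g x - g y| ≤ dist x y * (dist p q / (dist p q + δ)) := by
  have hd0 : (0:ℝ) < dist p q := dist_pos.2 hpq
  rcases h with h | h
  · have hD : dist p q + δ ≤ dist x p + dist x q := by unfold Ee at h; linarith
    refine le_trans (g_abs_le_x hpq hg x y) ?_
    rw [mul_div_assoc]
    refine mul_le_mul_of_nonneg_left ?_ dist_nonneg
    exact div_le_div_of_nonneg_left (le_of_lt hd0) (by linarith) hD
  · have hD : dist p q + δ ≤ dist y p + dist y q := by unfold Ee at h; linarith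
    have h1 : |g x - g y| ≤ dist x y * dist p q / (dist y p + dist y q) := by
      rw [abs_sub_le_iff]
      refine ⟨g_sub_le_y hpq hg x y, ?_⟩
      have := g_sub_le_x hpq hg y x
      rwa [dist_comm y x] at this
    refine le_trans h1 ?_
    rw [mul_div_assoc]
    refine mul_le_mul_of_nonneg_left ?_ dist_nonneg
    exact div_le_div_of_nonneg_left (le_of_lt hd0) (by linarith) hD

lemma g_pq {g : Lip0 M o} (hpq : p ≠ q) (hg : ∀ t, g t = magicFun o p q t) :
    g p - g q = dist p q := by
  have hd0 : (0:ℝ) < dist p q := dist_pos.2 hpq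
  rw [g_diff hpq hg p q]
  rw [dist_self, dist_comm q p, dist_self]
  field_simp
  ring

lemma norm_g_eq_one {g : Lip0 M o} (hpq : p ≠ q) (hg : ∀ t, g t = magicFun o p q t) :
    ‖g‖ = 1 := by
  have hd0 : (0:ℝ) < dist p q := dist_pos.2 hpq
  refine le_antisymm (lip0_norm_le g zero_le_one (fun x y => by
    simpa using g_lip hpq hg x y)) ?_
  have H := (Lip0.sInf_mem_lipSet g).2 p q
  rw [g_pq hpq hg] at H
  rw [abs_of_pos hd0] at H
  rw [Lip0.norm_def]
  nlinarith [H]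

lemma molecule_pairs_one {g : Lip0 M o} (hpq : p ≠ q) (hg : ∀ t, g t = magicFun o p q t) :
    molecule o p q g = 1 := by
  have hd0 : (0:ℝ) < dist p q := dist_pos.2 hpq
  unfold molecule
  rw [ContinuousLinearMap.smul_apply, ContinuousLinearMap.sub_apply, deltaF_apply, deltaF_apply]
  rw [smul_eq_mul]
  rw [show (g p : ℝ) - g q = dist p q from g_pq hpq hg]
  exact inv_mul_cancel₀ (ne_of_gt hd0)

end Stmt14MagicAux

section Stmt14Infra

variable {M : Type*} [MetricSpace M]

/-- Constructor for `Lip0` from a pairwise Lipschitz bound. -/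
def Lip0.ofFun (base : M) (F : M → ℝ) (K : ℝ) (h0 : 0 ≤ K)
    (H : ∀ x y, |F x - F y| ≤ K * dist x y) (hb : F base = 0) : Lip0 M base :=
  ⟨F, ⟨⟨K, h0⟩, LipschitzWith.of_dist_le_mul fun x y => by
      rw [Real.dist_eq]; exact H x y⟩, hb⟩

@[simp] lemma Lip0.ofFun_apply (base : M) (F : M → ℝ) (K : ℝ) (h0 : 0 ≤ K)
    (H : ∀ x y, |F x - F y| ≤ K * dist x y) (hb : F base = 0) (z : M) :
    (Lip0.ofFun base F K h0 H hb) z = F z := rfl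

lemma prod_diff_bound (a b c d : ℝ) : |a * b - c * d| ≤ |a| * |b - d| + |d| * |a - c| := by
  have h : a * b - c * d = a * (b - d) + d * (a - c) := by ring
  rw [h]
  calc |a * (b - d) + d * (a - c)| ≤ |a * (b - d)| + |d * (a - c)| := abs_add_le _ _
    _ = |a| * |b - d| + |d| * |a - c| := by rw [abs_mul, abs_mul]

/-- Lipschitz bound for products: `f` bounded on the support of `u`, `u` bounded. -/
lemma prod_lip {f u : M → ℝ} {C B Lf Lu : ℝ} (hC0 : 0 ≤ C) (hB0 : 0 ≤ B)
    (hLf : 0 ≤ Lf) (hLu : 0 ≤ Lu)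
    (hfC : ∀ z, u z ≠ 0 → |f z| ≤ C) (huB : ∀ z, |u z| ≤ B)
    (hf : ∀ x y, |f x - f y| ≤ Lf * dist x y) (hu : ∀ x y, |u x - u y| ≤ Lu * dist x y)
    (x y : M) : |f x * u x - f y * u y| ≤ (C * Lu + B * Lf) * dist x y := by
  rcases eq_or_ne (u x) 0 with hx | hx
  · rcases eq_or_ne (u y) 0 with hy | hy
    · simp only [hx, hy, mul_zero, sub_zero, abs_zero]
      positivity
    · rw [abs_sub_comm]
      calc |f y * u y - f x * u x| ≤ |f y| * |u y - u x| + |u x| * |f y - f x| :=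
            prod_diff_bound _ _ _ _
        _ ≤ C * (Lu * dist y x) + B * (Lf * dist y x) := by
            refine add_le_add (mul_le_mul (hfC y hy) (hu y x) (abs_nonneg _) hC0)
              (mul_le_mul (huB x) (hf y x) (abs_nonneg _) hB0)
        _ = (C * Lu + B * Lf) * dist x y := by rw [dist_comm y x]; ring
  · calc |f x * u x - f y * u y| ≤ |f x| * |u x - u y| + |u y| * |f x - f y| :=
          prod_diff_bound _ _ _ _
      _ ≤ C * (Lu * dist x y) + B * (Lf * dist x y) := by
          refine add_le_add (mul_le_mul (hfC x hx) (hu x y) (abs_nonneg _) hC0)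
            (mul_le_mul (huB y) (hf x y) (abs_nonneg _) hB0)
      _ = (C * Lu + B * Lf) * dist x y := by ring

lemma eq_zero_of_forall_eps {a K : ℝ} (hK : 0 ≤ K) (h : ∀ ε : ℝ, 0 < ε → |a| ≤ ε * K) :
    a = 0 := by
  by_contra ha
  have hpos : 0 < |a| := abs_pos.2 ha
  have h1 := h (|a| / (2 * (K + 1))) (by positivity)
  rw [div_mul_eq_mul_div, le_div_iff₀ (by positivity)] at h1
  nlinarith

/-- The `E`-cutoff `ψ_δ`: `0` on `{E ≤ δ}`, `1` on `{E ≥ 2δ}`. -/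
def psiE (p q : M) (δ : ℝ) (z : M) : ℝ := clamp01 (Ee p q z / δ - 1)

lemma psiE_nonneg (p q : M) (δ : ℝ) (z : M) : 0 ≤ psiE p q δ z := clamp01_nonneg _
lemma psiE_le_one (p q : M) (δ : ℝ) (z : M) : psiE p q δ z ≤ 1 := clamp01_le_one _

lemma psiE_eq_zero {p q : M} {δ : ℝ} (hδ : 0 < δ) {z : M} (h : Ee p q z ≤ δ) :
    psiE p q δ z = 0 :=
  clamp01_of_nonpos (by rw [sub_nonpos, div_le_one hδ]; exact h)

lemma psiE_eq_one {p q : M} {δ : ℝ} (hδ : 0 < δ) {z : M} (h : 2 * δ ≤ Ee p q z) :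
    psiE p q δ z = 1 :=
  clamp01_of_one_le (by rw [le_sub_iff_add_le, le_div_iff₀ hδ]; linarith)

lemma psiE_ne_one {p q : M} {δ : ℝ} (hδ : 0 < δ) {z : M} (h : psiE p q δ z ≠ 1) :
    Ee p q z < 2 * δ := by
  by_contra h2
  exact h (psiE_eq_one hδ (by linarith))

lemma psiE_lip {p q : M} {δ : ℝ} (hδ : 0 < δ) (x y : M) :
    |psiE p q δ x - psiE p q δ y| ≤ (2 / δ) * dist x y := by
  refine le_trans (clamp01_lip _ _) ?_
  have h : Ee p q x / δ - 1 - (Ee p q y / δ - 1) = (Ee p q x - Ee p q y) / δ := by ring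
  rw [h, abs_div, abs_of_pos hδ, div_le_iff₀ hδ]
  calc |Ee p q x - Ee p q y| ≤ 2 * dist x y := Ee_lip p q x y
    _ = 2 / δ * dist x y * δ := by field_simp

/-- bump of radius `r` at `c` : `1` on `B(c,r/2)`, `0` outside `B(c,r)`. -/
def bmp (c : M) (r : ℝ) (z : M) : ℝ := clamp01 (2 - 2 * dist z c / r)

lemma bmp_nonneg (c : M) (r : ℝ) (z : M) : 0 ≤ bmp c r z := clamp01_nonneg _
lemma bmp_le_one (c : M) (r : ℝ) (z : M) : bmp c r z ≤ 1 := clamp01_le_one _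

lemma bmp_eq_one {c : M} {r : ℝ} (hr : 0 < r) {z : M} (h : dist z c ≤ r / 2) :
    bmp c r z = 1 := by
  refine clamp01_of_one_le ?_
  rw [le_sub_iff_add_le]
  have : 2 * dist z c / r ≤ 1 := by rw [div_le_one hr]; linarith
  linarith

lemma bmp_eq_zero {c : M} {r : ℝ} (hr : 0 < r) {z : M} (h : r ≤ dist z c) :
    bmp c r z = 0 := by
  refine clamp01_of_nonpos ?_
  have : (2:ℝ) ≤ 2 * dist z c / r := by
    rw [le_div_iff₀ hr]; linarith
  linarith

lemma bmp_pos_dist {c : M} {r : ℝ} (hr : 0 < r) {z : M} (h : bmp c r z ≠ 0) :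
    dist z c < r := by
  by_contra h2
  exact h (bmp_eq_zero hr (by linarith [not_lt.1 h2]))

lemma bmp_self {c : M} {r : ℝ} (hr : 0 < r) : bmp c r c = 1 :=
  bmp_eq_one hr (by simp; positivity)

lemma bmp_lip {c : M} {r : ℝ} (hr : 0 < r) (x y : M) :
    |bmp c r x - bmp c r y| ≤ (2 / r) * dist x y := by
  refine le_trans (clamp01_lip _ _) ?_
  have h : 2 - 2 * dist x c / r - (2 - 2 * dist y c / r) = 2 * (dist y c - dist x c) / r := by
    ring
  rw [h, abs_div, abs_of_pos hr, div_le_iff₀ hr, abs_mul]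
  have h2 : |dist y c - dist x c| ≤ dist x y := by
    rw [abs_sub_comm]; exact abs_dist_sub_le x y c
  calc |(2:ℝ)| * |dist y c - dist x c| ≤ 2 * dist x y := by
        rw [abs_of_pos (by norm_num : (0:ℝ) < 2)]; linarith
    _ = 2 / r * dist x y * r := by field_simp
end Stmt14Infra

section Stmt14Useq

variable {M : Type*} [MetricSpace M]

/-- increasing sequence of "max of bumps" functions -/
def Useq (e : ℕ → M) (ρ : ℝ) : ℕ → M → ℝ
  | 0 => bmp (e 0) ρ
  | (n+1) => fun z => max (Useq e ρ n z) (bmp (e (n+1)) ρ z)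

lemma Useq_nonneg (e : ℕ → M) (ρ : ℝ) (n : ℕ) (z : M) : 0 ≤ Useq e ρ n z := by
  induction n with
  | zero => exact bmp_nonneg _ _ _
  | succ n ih => exact le_trans ih (le_max_left _ _)

lemma Useq_le_one (e : ℕ → M) (ρ : ℝ) (n : ℕ) (z : M) : Useq e ρ n z ≤ 1 := by
  induction n with
  | zero => exact bmp_le_one _ _ _
  | succ n ih => exact max_le ih (bmp_le_one _ _ _)

lemma Useq_mono (e : ℕ → M) (ρ : ℝ) {m n : ℕ} (h : m ≤ n) (z : M) :
    Useq e ρ m z ≤ Useq e ρ n z := by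
  induction n with
  | zero => rw [Nat.le_zero.1 h]
  | succ n ih =>
      rcases Nat.lt_succ_iff_lt_or_eq.1 (Nat.lt_succ_of_le h) with h2 | h2
      · exact le_trans (ih (Nat.lt_succ_iff.1 h2)) (le_max_left _ _)
      · rw [h2]

lemma Useq_eq_one {e : ℕ → M} {ρ : ℝ} (hρ : 0 < ρ) {i n : ℕ} (h : i ≤ n) :
    Useq e ρ n (e i) = 1 := by
  refine le_antisymm (Useq_le_one _ _ _ _) ?_
  have h1 : bmp (e i) ρ (e i) = 1 := bmp_self hρ
  have h2 : Useq e ρ i (e i) = 1 := by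
    cases i with
    | zero => exact h1
    | succ i =>
        refine le_antisymm (Useq_le_one _ _ _ _) ?_
        show (1:ℝ) ≤ max _ _
        rw [← h1]
        exact le_max_right _ _
  calc (1:ℝ) = Useq e ρ i (e i) := h2.symm
    _ ≤ Useq e ρ n (e i) := Useq_mono e ρ h _

lemma Useq_lip {e : ℕ → M} {ρ : ℝ} (hρ : 0 < ρ) (n : ℕ) (x y : M) :
    |Useq e ρ n x - Useq e ρ n y| ≤ (2 / ρ) * dist x y := by
  induction n with
  | zero => exact bmp_lip hρ x y
  | succ n ih =>
      refine le_trans (abs_max_sub_max_le_max _ _ _ _) ?_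
      exact max_le ih (bmp_lip hρ x y)

/-- The increment functions `V i = U i - U (i-1)` (with `V 0 = U 0`). -/
def Vseq (e : ℕ → M) (ρ : ℝ) : ℕ → M → ℝ
  | 0 => Useq e ρ 0
  | (n+1) => fun z => Useq e ρ (n+1) z - Useq e ρ n z

lemma Vseq_nonneg (e : ℕ → M) (ρ : ℝ) (n : ℕ) (z : M) : 0 ≤ Vseq e ρ n z := by
  cases n with
  | zero => exact Useq_nonneg _ _ _ _
  | succ n => exact sub_nonneg.2 (Useq_mono e ρ (Nat.le_succ n) z)

lemma Vseq_le_one (e : ℕ → M) (ρ : ℝ) (n : ℕ) (z : M) : Vseq e ρ n z ≤ 1 := by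
  cases n with
  | zero => exact Useq_le_one _ _ _ _
  | succ n =>
      have := Useq_le_one e ρ (n+1) z
      have := Useq_nonneg e ρ n z
      show Useq e ρ (n+1) z - Useq e ρ n z ≤ 1
      linarith

lemma Vseq_lip {e : ℕ → M} {ρ : ℝ} (hρ : 0 < ρ) (n : ℕ) (x y : M) :
    |Vseq e ρ n x - Vseq e ρ n y| ≤ (4 / ρ) * dist x y := by
  have hd : (0:ℝ) ≤ dist x y := dist_nonneg
  have h2 : (2:ℝ)/ρ ≤ 4/ρ := by gcongr <;> norm_num
  cases n with
  | zero =>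
      refine le_trans (Useq_lip hρ 0 x y) ?_
      exact mul_le_mul_of_nonneg_right h2 hd
  | succ n =>
      have ha := Useq_lip (e := e) hρ (n+1) x y
      have hb := Useq_lip (e := e) hρ n x y
      show |Useq e ρ (n+1) x - Useq e ρ n x - (Useq e ρ (n+1) y - Useq e ρ n y)| ≤ _
      have hr : Useq e ρ (n+1) x - Useq e ρ n x - (Useq e ρ (n+1) y - Useq e ρ n y)
          = (Useq e ρ (n+1) x - Useq e ρ (n+1) y) - (Useq e ρ n x - Useq e ρ n y) := by ring
      rw [hr]
      refine le_trans (abs_sub _ _) ?_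
      have : (4:ℝ) / ρ * dist x y = 2/ρ * dist x y + 2/ρ * dist x y := by ring
      rw [this]
      exact add_le_add ha hb

lemma Vseq_sum (e : ℕ → M) (ρ : ℝ) (n : ℕ) (z : M) :
    ∑ i ∈ Finset.range (n+1), Vseq e ρ i z = Useq e ρ n z := by
  induction n with
  | zero => simp [Vseq]
  | succ n ih =>
      rw [Finset.sum_range_succ, ih]
      show Useq e ρ n z + (Useq e ρ (n+1) z - Useq e ρ n z) = _
      ring

lemma Vseq_pos_dist {e : ℕ → M} {ρ : ℝ} (hρ : 0 < ρ) {n : ℕ} {z : M}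
    (h : Vseq e ρ n z ≠ 0) : dist z (e n) < ρ := by
  refine bmp_pos_dist hρ ?_
  intro hb
  apply h
  cases n with
  | zero => exact hb
  | succ n =>
      show Useq e ρ (n+1) z - Useq e ρ n z = 0
      show max (Useq e ρ n z) (bmp (e (n+1)) ρ z) - Useq e ρ n z = 0
      rw [hb, max_eq_left (Useq_nonneg _ _ _ _)]
      ring

end Stmt14Useq

section Stmt14Mu

open NormedSpace

variable {M : Type*} [MetricSpace M] {o p q : M}

lemma mu_abs_le {μ : StrongDual ℝ (Lip0 M o)} (hμn : ‖μ‖ ≤ 1) (h : Lip0 M o) : |μ h| ≤ ‖h‖ := by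
  have h1 := μ.le_opNorm h
  rw [Real.norm_eq_abs] at h1
  nlinarith [norm_nonneg h, norm_nonneg μ]

/-- Finitely supported approximation of elements of the free space. -/
lemma freespace_approx {μ : StrongDual ℝ (Lip0 M o)} (hμF : μ ∈ FreeSpace M o)
    {ε : ℝ} (hε : 0 < ε) :
    ∃ (s : Finset M) (cf : M → ℝ),
      ∀ h : Lip0 M o, |μ h - ∑ z ∈ s, cf z * h z| ≤ ε * ‖h‖ := by
  have hcl : μ ∈ closure ((Submodule.span ℝ (Set.range (deltaF M o)) : Submodule ℝ _) :
      Set (StrongDual ℝ (Lip0 M o))) := hμF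
  rw [Metric.mem_closure_iff] at hcl
  obtain ⟨ν, hν, hdist⟩ := hcl ε hε
  obtain ⟨c, hc⟩ := Finsupp.mem_span_range_iff_exists_finsupp.1 hν
  refine ⟨c.support, fun z => c z, fun h => ?_⟩
  have hνh : ν h = ∑ z ∈ c.support, c z * h z := by
    rw [← hc, Finsupp.sum, ContinuousLinearMap.sum_apply]
    refine Finset.sum_congr rfl fun z _ => ?_
    rw [ContinuousLinearMap.smul_apply, deltaF_apply, smul_eq_mul]
  rw [← hνh]
  have h1 : μ h - ν h = (μ - ν) h := by
    rw [ContinuousLinearMap.sub_apply]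
  rw [h1]
  have h2 := (μ - ν).le_opNorm h
  rw [Real.norm_eq_abs] at h2
  refine le_trans h2 ?_
  have h3 : ‖μ - ν‖ ≤ ε := by
    rw [← dist_eq_norm]
    exact le_of_lt hdist
  exact mul_le_mul_of_nonneg_right h3 (norm_nonneg h)

/-- Key vanishing lemma: `μ` kills every Lipschitz function vanishing on `{E < δ}`. -/
lemma kill_of_vanish {g : Lip0 M o} {μ : StrongDual ℝ (Lip0 M o)}
    (hpq : p ≠ q) (hg : ∀ t, g t = magicFun o p q t)
    (hμn : ‖μ‖ ≤ 1) (hμg : μ g = 1)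
    {δ : ℝ} (hδ : 0 < δ) (h : Lip0 M o) (hvan : ∀ z, Ee p q z < δ → h z = 0) :
    μ h = 0 := by
  have hd0 : (0:ℝ) < dist p q := dist_pos.2 hpq
  set L := ‖h‖ with hL
  have hL0 : 0 ≤ L := norm_nonneg h
  set t : ℝ := δ / ((dist p q + δ) * (L + 1)) with ht
  have ht0 : 0 < t := by positivity
  have key : ∀ s : ℝ, |s| ≤ t → ‖g + s • h‖ ≤ 1 := by
    intro s hs
    refine lip0_norm_le _ zero_le_one fun x y => ?_
    have hco : (g + s • h) x - (g + s • h) y = (g x - g y) + s * (h x - h y) := by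
      simp [Lip0.coe_add, Lip0.coe_smul]
      ring
    rw [hco, one_mul]
    by_cases hxy : Ee p q x < δ ∧ Ee p q y < δ
    · rw [hvan x hxy.1, hvan y hxy.2]
      simpa using g_lip hpq hg x y
    · have hor : δ ≤ Ee p q x ∨ δ ≤ Ee p q y := by
        by_contra h2
        push_neg at h2
        exact hxy ⟨h2.1, h2.2⟩
      have h1 := g_gap hpq hg hδ hor
      have h2 : |s * (h x - h y)| ≤ t * (L * dist x y) := by
        rw [abs_mul]
        refine mul_le_mul hs (h.norm_apply_le x y) (abs_nonneg _) (le_of_lt ht0)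
      have h3 : t * L ≤ δ / (dist p q + δ) := by
        rw [ht, div_mul_eq_mul_div, div_le_div_iff₀ (by positivity) (by positivity)]
        nlinarith
      calc |g x - g y + s * (h x - h y)| ≤ |g x - g y| + |s * (h x - h y)| := abs_add_le _ _
        _ ≤ dist x y * (dist p q / (dist p q + δ)) + t * L * dist x y := by
            have h2' : t * (L * dist x y) = t * L * dist x y := by ring
            rw [h2'] at h2
            linarith
        _ ≤ dist x y * (dist p q / (dist p q + δ)) + δ / (dist p q + δ) * dist x y := by
            have := mul_le_mul_of_nonneg_right h3 (dist_nonneg (x := x) (y := y))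
            linarith
        _ = dist x y * ((dist p q + δ) / (dist p q + δ)) := by ring
        _ = dist x y := by rw [div_self (by positivity)]; ring
  have hplus : μ (g + t • h) ≤ 1 := by
    refine le_trans (le_abs_self _) (le_trans (mu_abs_le hμn _) (key t (by
      rw [abs_of_pos ht0])))
  have hminus : μ (g + (-t) • h) ≤ 1 := by
    refine le_trans (le_abs_self _) (le_trans (mu_abs_le hμn _) (key (-t) (by
      rw [abs_neg, abs_of_pos ht0])))
  rw [map_add, map_smul, hμg, smul_eq_mul] at hplus hminus
  have h1 : t * μ h ≤ 0 := by linarith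
  have h2 : 0 ≤ t * μ h := by nlinarith
  nlinarith

lemma molecule_apply (o p q : M) (h : Lip0 M o) :
    molecule o p q h = (dist p q)⁻¹ * (h p - h q) := by
  unfold molecule
  rw [ContinuousLinearMap.smul_apply, ContinuousLinearMap.sub_apply, deltaF_apply,
    deltaF_apply, smul_eq_mul]

/-- lower bound on positive distances within a finite set -/
lemma finset_pos_dist (s : Finset M) (c : M) :
    ∃ r : ℝ, 0 < r ∧ ∀ z ∈ s, dist z c ≠ 0 → r ≤ dist z c := by
  classical
  induction s using Finset.induction_on with
  | empty => exact ⟨1, one_pos, by simp⟩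
  | @insert a s ha ih =>
      obtain ⟨r, hr, hs⟩ := ih
      by_cases h : dist a c = 0
      · refine ⟨r, hr, fun z hz hzc => ?_⟩
        rcases Finset.mem_insert.1 hz with rfl | hz'
        · exact absurd h hzc
        · exact hs z hz' hzc
      · refine ⟨min r (dist a c), lt_min hr (lt_of_le_of_ne dist_nonneg (Ne.symm h)), ?_⟩
        intro z hz hzc
        rcases Finset.mem_insert.1 hz with rfl | hz'
        · exact min_le_right _ _
        · exact le_trans (min_le_left _ _) (hs z hz' hzc)

/-- a finite set is covered by an initial segment of an enumeration -/
lemma finset_cover_index (s : Finset M) (e : ℕ → M) (h : ∀ z ∈ s, ∃ i, e i = z) :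
    ∃ n : ℕ, ∀ z ∈ s, ∃ i ≤ n, e i = z := by
  classical
  induction s using Finset.induction_on with
  | empty => exact ⟨0, by simp⟩
  | @insert a s ha ih =>
      obtain ⟨n, hn⟩ := ih fun z hz => h z (Finset.mem_insert_of_mem hz)
      obtain ⟨j, hj⟩ := h a (Finset.mem_insert_self a s)
      refine ⟨max n j, fun z hz => ?_⟩
      rcases Finset.mem_insert.1 hz with rfl | hz'
      · exact ⟨j, le_max_right _ _, hj⟩
      · obtain ⟨i, hi, hie⟩ := hn z hz'
        exact ⟨i, le_trans hi (le_max_left _ _), hie⟩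

end Stmt14Mu

section Stmt14Step

open NormedSpace

variable {M : Type*} [MetricSpace M] {o p q : M}

lemma step_lemma {g : Lip0 M o} {μ : StrongDual ℝ (Lip0 M o)}
    (hpq : p ≠ q) (hg : ∀ t, g t = magicFun o p q t)
    (hμF : μ ∈ FreeSpace M o) (hμn : ‖μ‖ ≤ 1) (hμg : μ g = 1)
    (w : Lip0 M o) (Λ : ℝ) (hΛ : ∀ z, |w z| ≤ Λ) (hw : μ w ≠ 0)
    {σ : ℝ} (hσ : 0 < σ) :
    ∃ (w' : Lip0 M o) (x : M), μ w' ≠ 0 ∧ (∀ z, |w' z| ≤ Λ) ∧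
      (∀ z, w' z ≠ 0 → w z ≠ 0) ∧
      (∀ z, w' z ≠ 0 → dist z x ≤ σ ∧ Ee p q z ≤ σ) := by
  classical
  have hΛ0 : 0 ≤ Λ := le_trans (abs_nonneg _) (hΛ o)
  have hσ2 : 0 < σ / 2 := by positivity
  have h42 : (2:ℝ) / (σ/2) = 4 / σ := by
    field_simp
    norm_num
  -- the E-cutoffs
  set ψf : M → ℝ := fun z => psiE p q (σ/2) z with hψf
  set βf : M → ℝ := fun z => 1 - ψf z with hβf
  have hψ01 : ∀ z, 0 ≤ ψf z ∧ ψf z ≤ 1 := fun z => ⟨psiE_nonneg _ _ _ _, psiE_le_one _ _ _ _⟩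
  have hβ01 : ∀ z, |βf z| ≤ 1 := fun z => by
    have h1 := (hψ01 z).1
    have h2 := (hψ01 z).2
    have hb : βf z = 1 - ψf z := rfl
    rw [abs_le, hb]
    exact ⟨by linarith, by linarith⟩
  have hψlip : ∀ x y, |ψf x - ψf y| ≤ (4/σ) * dist x y := fun x y => by
    rw [← h42]; exact psiE_lip hσ2 x y
  have hβlip : ∀ x y, |βf x - βf y| ≤ (4/σ) * dist x y := fun x y => by
    have : βf x - βf y = -(ψf x - ψf y) := by rw [hβf]; ring
    rw [this, abs_neg]; exact hψlip x y
  have hψabs : ∀ z, |ψf z| ≤ 1 := fun z => by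
    rw [abs_le]; exact ⟨by linarith [(hψ01 z).1], (hψ01 z).2⟩
  have h4σ : (0:ℝ) ≤ 4/σ := by positivity
  have hK1 : (0:ℝ) ≤ Λ * (4/σ) + 1 * ‖w‖ := by positivity
  -- w₁ = w·β , wψ = w·ψ
  set w₁ : Lip0 M o := Lip0.ofFun o (fun z => w z * βf z) (Λ * (4/σ) + 1 * ‖w‖) hK1
    (prod_lip hΛ0 zero_le_one (norm_nonneg w) h4σ (fun z _ => hΛ z) hβ01
      (fun x y => w.norm_apply_le x y) hβlip)
    (by simp) with hw₁
  set wψ : Lip0 M o := Lip0.ofFun o (fun z => w z * ψf z) (Λ * (4/σ) + 1 * ‖w‖) hK1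
    (prod_lip hΛ0 zero_le_one (norm_nonneg w) h4σ (fun z _ => hΛ z) hψabs
      (fun x y => w.norm_apply_le x y) hψlip)
    (by simp) with hwψ
  have hsplit : w = w₁ + wψ := by
    refine DFunLike.ext _ _ fun z => ?_
    show w z = w₁ z + wψ z
    rw [hw₁, hwψ]
    simp only [Lip0.ofFun_apply, hβf]
    ring
  have hkillψ : μ wψ = 0 := by
    refine kill_of_vanish hpq hg hμn hμg hσ2 wψ fun z hz => ?_
    show w z * ψf z = 0
    have h0 : ψf z = 0 := psiE_eq_zero hσ2 (le_of_lt hz)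
    rw [h0, mul_zero]
  have hμ1 : μ w₁ ≠ 0 := by
    have : μ w = μ w₁ + μ wψ := by rw [hsplit, map_add]
    rw [hkillψ, add_zero] at this
    rw [← this]; exact hw
  have hb1 : ∀ z, |w₁ z| ≤ Λ := fun z => by
    show |w z * βf z| ≤ Λ
    rw [abs_mul]
    calc |w z| * |βf z| ≤ Λ * 1 := mul_le_mul (hΛ z) (hβ01 z) (abs_nonneg _) hΛ0
      _ = Λ := mul_one Λ
  have hsupp1 : ∀ z, w₁ z ≠ 0 → w z ≠ 0 ∧ Ee p q z ≤ σ := by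
    intro z hz
    have hz' : w z * βf z ≠ 0 := hz
    constructor
    · exact fun h0 => hz' (by rw [h0, zero_mul])
    · have hβne : βf z ≠ 0 := fun h0 => hz' (by rw [h0, mul_zero])
      have hψne : ψf z ≠ 1 := by
        intro h1
        exact hβne (by rw [hβf]; simp [h1])
      have := psiE_ne_one hσ2 hψne
      linarith
  -- approximation data
  have h2σ : (0:ℝ) ≤ 2/σ := by positivity
  set K₂ : ℝ := Λ * (2/σ) + 1 * ‖w₁‖ with hK₂def
  have hK₂0 : 0 ≤ K₂ := by positivity
  set ε : ℝ := |μ w₁| / (2 * (K₂ + 1)) with hεdef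
  have hε : 0 < ε := by
    have := abs_pos.2 hμ1
    positivity
  obtain ⟨s, cf, hcf⟩ := freespace_approx hμF hε
  -- enumeration of s
  set e : ℕ → M := fun i => s.toList.getD i o with he
  have hcov : ∀ z ∈ s, ∃ i, e i = z := by
    intro z hz
    have hz' : z ∈ s.toList := Finset.mem_toList.2 hz
    obtain ⟨i, hi, hget⟩ := List.mem_iff_getElem.1 hz'
    exact ⟨i, by rw [he]; simp only []; rw [List.getD_eq_getElem s.toList o hi]; exact hget⟩
  obtain ⟨n, hn⟩ := finset_cover_index s e hcov
  -- the U and V weighted functions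
  have hUbnd : ∀ k z, |1 - Useq e σ k z| ≤ 1 := fun k z => by
    rw [abs_le]
    constructor
    · linarith [Useq_le_one e σ k z]
    · linarith [Useq_nonneg e σ k z]
  have hUlip : ∀ k (x y : M), |(1 - Useq e σ k x) - (1 - Useq e σ k y)| ≤ (2/σ) * dist x y := by
    intro k x y
    have : (1 - Useq e σ k x) - (1 - Useq e σ k y) = -(Useq e σ k x - Useq e σ k y) := by ring
    rw [this, abs_neg]
    exact Useq_lip hσ k x y
  set wU : ℕ → Lip0 M o := fun k => Lip0.ofFun o (fun z => w₁ z * Useq e σ k z)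
    (Λ * (2/σ) + 1 * ‖w₁‖) hK₂0
    (prod_lip hΛ0 zero_le_one (norm_nonneg w₁) h2σ (fun z _ => hb1 z)
      (fun z => by rw [abs_of_nonneg (Useq_nonneg e σ k z)]; exact Useq_le_one e σ k z)
      (fun x y => w₁.norm_apply_le x y) (fun x y => Useq_lip hσ k x y))
    (by simp) with hwU
  set w₂ : Lip0 M o := Lip0.ofFun o (fun z => w₁ z * (1 - Useq e σ n z))
    (Λ * (2/σ) + 1 * ‖w₁‖) hK₂0
    (prod_lip hΛ0 zero_le_one (norm_nonneg w₁) h2σ (fun z _ => hb1 z)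
      (hUbnd n) (fun x y => w₁.norm_apply_le x y) (hUlip n))
    (by simp) with hw₂
  have hVbnd : ∀ i z, |Vseq e σ i z| ≤ 1 := fun i z => by
    rw [abs_of_nonneg (Vseq_nonneg e σ i z)]; exact Vseq_le_one e σ i z
  have hK₃0 : (0:ℝ) ≤ Λ * (4/σ) + 1 * ‖w₁‖ := by positivity
  set wV : ℕ → Lip0 M o := fun i => Lip0.ofFun o (fun z => w₁ z * Vseq e σ i z)
    (Λ * (4/σ) + 1 * ‖w₁‖) hK₃0
    (prod_lip hΛ0 zero_le_one (norm_nonneg w₁) h4σ (fun z _ => hb1 z)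
      (hVbnd i) (fun x y => w₁.norm_apply_le x y) (fun x y => Vseq_lip hσ i x y))
    (by simp) with hwV
  -- ν kills w₂
  have hν2 : ∑ z ∈ s, cf z * w₂ z = 0 := by
    refine Finset.sum_eq_zero fun z hz => ?_
    obtain ⟨i, hi, hie⟩ := hn z hz
    have h1 : Useq e σ n z = 1 := by rw [← hie]; exact Useq_eq_one hσ hi
    show cf z * (w₁ z * (1 - Useq e σ n z)) = 0
    rw [h1]; ring
  have hw₂small : |μ w₂| < |μ w₁| := by
    have h1 := hcf w₂
    rw [hν2, sub_zero] at h1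
    have h2 : ‖w₂‖ ≤ K₂ := by
      rw [hK₂def]
      exact lip0_norm_le w₂ hK₂0
        (prod_lip hΛ0 zero_le_one (norm_nonneg w₁) h2σ (fun z _ => hb1 z)
          (hUbnd n) (fun x y => w₁.norm_apply_le x y) (hUlip n))
    have h3 : |μ w₂| ≤ ε * K₂ :=
      le_trans h1 (mul_le_mul_of_nonneg_left h2 (le_of_lt hε))
    have h4 : 0 < |μ w₁| := abs_pos.2 hμ1
    have h5 : ε * K₂ < |μ w₁| := by
      rw [hεdef, div_mul_eq_mul_div, div_lt_iff₀ (by positivity)]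
      nlinarith
    exact lt_of_le_of_lt h3 h5
  have hid2 : w₁ = wU n + w₂ := by
    refine DFunLike.ext _ _ fun z => ?_
    show w₁ z = w₁ z * Useq e σ n z + w₁ z * (1 - Useq e σ n z)
    ring
  have h6 : μ w₁ = μ (wU n) + μ w₂ := by
    conv_lhs => rw [hid2]
    rw [map_add]
  have hUn : μ (wU n) ≠ 0 := by
    intro h0
    rw [h0, zero_add] at h6
    rw [h6] at hw₂small
    exact lt_irrefl _ hw₂small
  have hex : ∃ i, i ≤ n ∧ μ (wV i) ≠ 0 := by
    by_contra hno
    push_neg at hno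
    have hzero : ∀ k, k ≤ n → μ (wU k) = 0 := by
      intro k
      induction k with
      | zero =>
          intro _
          have hid0 : wU 0 = wV 0 := by
            refine DFunLike.ext _ _ fun z => ?_
            show w₁ z * Useq e σ 0 z = w₁ z * Vseq e σ 0 z
            rfl
          rw [hid0]
          exact hno 0 (Nat.zero_le n)
      | succ k ih =>
          intro hk
          have hidk : wU (k+1) = wU k + wV (k+1) := by
            refine DFunLike.ext _ _ fun z => ?_
            show w₁ z * Useq e σ (k+1) z = w₁ z * Useq e σ k z + w₁ z * Vseq e σ (k+1) z
            show w₁ z * Useq e σ (k+1) z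
              = w₁ z * Useq e σ k z + w₁ z * (Useq e σ (k+1) z - Useq e σ k z)
            ring
          rw [hidk, map_add, ih (Nat.le_of_succ_le hk), hno (k+1) hk, zero_add]
    exact hUn (hzero n le_rfl)
  obtain ⟨i, hin, hVi⟩ := hex
  refine ⟨wV i, e i, hVi, ?_, ?_, ?_⟩
  · intro z
    show |w₁ z * Vseq e σ i z| ≤ Λ
    rw [abs_mul]
    calc |w₁ z| * |Vseq e σ i z| ≤ Λ * 1 :=
          mul_le_mul (hb1 z) (hVbnd i z) (abs_nonneg _) hΛ0
      _ = Λ := mul_one Λ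
  · intro z hz
    have h1 : w₁ z ≠ 0 := by
      intro h0
      exact hz (show w₁ z * Vseq e σ i z = 0 by rw [h0, zero_mul])
    exact (hsupp1 z h1).1
  · intro z hz
    have h1 : w₁ z ≠ 0 := by
      intro h0
      exact hz (show w₁ z * Vseq e σ i z = 0 by rw [h0, zero_mul])
    have h2 : Vseq e σ i z ≠ 0 := by
      intro h0
      exact hz (show w₁ z * Vseq e σ i z = 0 by rw [h0, mul_zero])
    exact ⟨le_of_lt (Vseq_pos_dist hσ h2), (hsupp1 z h1).2⟩

end Stmt14Step

section Stmt14Mid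

open NormedSpace

variable {M : Type*} [MetricSpace M] {o p q : M}

lemma mid_kill [CompleteSpace M] {g : Lip0 M o} {μ : StrongDual ℝ (Lip0 M o)}
    (hpq : p ≠ q) (hseg : {z : M | dist p q = dist z p + dist z q} = {p, q})
    (hg : ∀ t, g t = magicFun o p q t)
    (hμF : μ ∈ FreeSpace M o) (hμn : ‖μ‖ ≤ 1) (hμg : μ g = 1)
    (w : Lip0 M o) (Λ ρ₀ : ℝ) (hρ : 0 < ρ₀) (hΛ : ∀ z, |w z| ≤ Λ)
    (hsupp : ∀ z, w z ≠ 0 → ρ₀ ≤ dist z p ∧ ρ₀ ≤ dist z q) : μ w = 0 := by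
  classical
  by_contra hw
  have step : ∀ (v : Lip0 M o) (k : ℕ), μ v ≠ 0 → (∀ z, |v z| ≤ Λ) →
      ∃ P : Lip0 M o × M, μ P.1 ≠ 0 ∧ (∀ z, |P.1 z| ≤ Λ) ∧
        (∀ z, P.1 z ≠ 0 → v z ≠ 0) ∧
        (∀ z, P.1 z ≠ 0 → dist z P.2 ≤ (1/2)^k ∧ Ee p q z ≤ (1/2)^k) := by
    intro v k hv hb
    obtain ⟨w', x, h1, h2, h3, h4⟩ :=
      step_lemma hpq hg hμF hμn hμg v Λ hb hv (σ := (1/2)^k) (by positivity)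
    exact ⟨(w', x), h1, h2, h3, h4⟩
  let Pk := {v : Lip0 M o // μ v ≠ 0 ∧ ∀ z, |v z| ≤ Λ}
  let next : ℕ → Pk → Pk := fun k v =>
    ⟨(step v.1 k v.2.1 v.2.2).choose.1,
     (step v.1 k v.2.1 v.2.2).choose_spec.1,
     (step v.1 k v.2.1 v.2.2).choose_spec.2.1⟩
  let T : ℕ → Pk := fun n => Nat.rec ⟨w, hw, hΛ⟩ next n
  have hnest : ∀ k z, (T (k+1)).1 z ≠ 0 → (T k).1 z ≠ 0 := by
    intro k
    exact (step (T k).1 k (T k).2.1 (T k).2.2).choose_spec.2.2.1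
  have hball : ∀ k, ∀ z, (T (k+1)).1 z ≠ 0 →
      dist z ((step (T k).1 k (T k).2.1 (T k).2.2).choose.2) ≤ (1/2)^k ∧
        Ee p q z ≤ (1/2)^k := by
    intro k
    exact (step (T k).1 k (T k).2.1 (T k).2.2).choose_spec.2.2.2
  have hchain : ∀ k m z, (T (k+m)).1 z ≠ 0 → (T k).1 z ≠ 0 := by
    intro k m
    induction m with
    | zero => exact fun z hz => hz
    | succ m ih => exact fun z hz => ih z (hnest (k+m) z hz)
  have hne : ∀ k, ∃ z, (T k).1 z ≠ 0 := by
    intro k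
    by_contra h
    push_neg at h
    have hz : (T k).1 = 0 := by
      refine DFunLike.ext _ _ fun z => ?_
      rw [h z]
      rfl
    exact (T k).2.1 (by rw [hz, map_zero])
  choose ζ hζ using fun k => hne (k+1)
  have hdist2 : ∀ (k j j' : ℕ), k ≤ j → k ≤ j' → dist (ζ j) (ζ j') ≤ 2 * (1/2)^k := by
    intro k j j' hkj hkj'
    have key : ∀ i, k ≤ i → (T (k+1)).1 (ζ i) ≠ 0 := by
      intro i hi
      have e1 : (k+1) + (i - k) = i + 1 := by omega
      exact hchain (k+1) (i-k) (ζ i) (by rw [e1]; exact hζ i)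
    have h1 := (hball k (ζ j) (key j hkj)).1
    have h2 := (hball k (ζ j') (key j' hkj')).1
    calc dist (ζ j) (ζ j') ≤ dist (ζ j) _ + dist _ (ζ j') := dist_triangle _ _ _
      _ ≤ (1/2)^k + (1/2)^k := add_le_add h1 (by rw [dist_comm]; exact h2)
      _ = 2 * (1/2)^k := by ring
  have hcauchy : CauchySeq ζ := by
    rw [Metric.cauchySeq_iff]
    intro ε hε
    obtain ⟨k, hk⟩ := exists_pow_lt_of_lt_one (show (0:ℝ) < ε/2 by positivity)
      (by norm_num : (1/2:ℝ) < 1)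
    exact ⟨k, fun m hm n' hn' => lt_of_le_of_lt (hdist2 k m n' hm hn') (by linarith)⟩
  obtain ⟨xs, hx⟩ := cauchySeq_tendsto_of_complete hcauchy
  have hEe0 : Ee p q xs = 0 := by
    have ht : Filter.Tendsto (fun k => Ee p q (ζ k)) Filter.atTop (nhds (Ee p q xs)) :=
      ((Ee_continuous p q).tendsto xs).comp hx
    have hub : ∀ k, Ee p q (ζ k) ≤ (1/2)^k := fun k => (hball k (ζ k) (hζ k)).2
    have h0 : Filter.Tendsto (fun k : ℕ => ((1:ℝ)/2)^k) Filter.atTop (nhds 0) :=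
      tendsto_pow_atTop_nhds_zero_of_lt_one (by norm_num) (by norm_num)
    exact le_antisymm (le_of_tendsto_of_tendsto' ht h0 hub) (Ee_nonneg p q xs)
  have hdp : ∀ k, ρ₀ ≤ dist (ζ k) p ∧ ρ₀ ≤ dist (ζ k) q := by
    intro k
    have e1 : 0 + (k+1) = k+1 := by omega
    have h1 : (T 0).1 (ζ k) ≠ 0 := hchain 0 (k+1) (ζ k) (by rw [e1]; exact hζ k)
    exact hsupp (ζ k) h1
  have hdpx : ρ₀ ≤ dist xs p := by
    have ht : Filter.Tendsto (fun k => dist (ζ k) p) Filter.atTop (nhds (dist xs p)) :=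
      hx.dist tendsto_const_nhds
    exact ge_of_tendsto' ht fun k => (hdp k).1
  have hdqx : ρ₀ ≤ dist xs q := by
    have ht : Filter.Tendsto (fun k => dist (ζ k) q) Filter.atTop (nhds (dist xs q)) :=
      hx.dist tendsto_const_nhds
    exact ge_of_tendsto' ht fun k => (hdp k).2
  rcases Ee_eq_zero_iff hseg hEe0 with h | h
  · rw [h, dist_self] at hdpx; linarith
  · rw [h, dist_self] at hdqx; linarith

end Stmt14Mid

section Stmt14Near

open NormedSpace

variable {M : Type*} [MetricSpace M] {o p q : M}

lemma near_point_kill [CompleteSpace M] {g : Lip0 M o} {μ : StrongDual ℝ (Lip0 M o)}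
    (hpq : p ≠ q) (hseg : {z : M | dist p q = dist z p + dist z q} = {p, q})
    (hg : ∀ t, g t = magicFun o p q t)
    (hμF : μ ∈ FreeSpace M o) (hμn : ‖μ‖ ≤ 1) (hμg : μ g = 1)
    (c : M) (hc : c = p ∨ c = q) (w : Lip0 M o) (Λ : ℝ) (hΛ0 : 0 ≤ Λ)
    (hdom : ∀ z, |w z| ≤ Λ * dist z c)
    (hsupp : ∀ z, w z ≠ 0 → dist z c ≤ dist p q / 8) : μ w = 0 := by
  classical
  have hd0 : (0:ℝ) < dist p q := dist_pos.2 hpq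
  set ρ₀ : ℝ := dist p q / 8 with hρ₀def
  have hρ₀ : 0 < ρ₀ := by positivity
  have hwc : w c = 0 := by
    have := hdom c
    rw [dist_self, mul_zero] at this
    exact abs_eq_zero.1 (le_antisymm this (abs_nonneg _))
  have hwbnd : ∀ z, |w z| ≤ Λ * ρ₀ := by
    intro z
    by_cases hz : w z = 0
    · rw [hz, abs_zero]; positivity
    · exact le_trans (hdom z) (mul_le_mul_of_nonneg_left (hsupp z hz) hΛ0)
  -- the localized products
  have hWlip : ∀ r : ℝ, 0 < r → ∀ x y,
      |w x * bmp c r x - w y * bmp c r y| ≤ (2*Λ + ‖w‖) * dist x y := by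
    intro r hr x y
    have hfC : ∀ z, bmp c r z ≠ 0 → |w z| ≤ Λ * r := by
      intro z hz
      exact le_trans (hdom z) (mul_le_mul_of_nonneg_left (le_of_lt (bmp_pos_dist hr hz)) hΛ0)
    have h := prod_lip (by positivity) zero_le_one (norm_nonneg w) (by positivity : (0:ℝ) ≤ 2/r)
      hfC (fun z => by rw [abs_of_nonneg (bmp_nonneg c r z)]; exact bmp_le_one c r z)
      (fun x y => w.norm_apply_le x y) (fun x y => bmp_lip hr x y) x y
    have hconst : (Λ * r) * (2/r) + 1 * ‖w‖ = 2*Λ + ‖w‖ := by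
      field_simp
    rwa [hconst] at h
  have hKnn : (0:ℝ) ≤ 2*Λ + ‖w‖ := by positivity
  set Wr : ∀ r : ℝ, 0 < r → Lip0 M o := fun r hr =>
    Lip0.ofFun o (fun z => w z * bmp c r z) (2*Λ + ‖w‖) hKnn (hWlip r hr)
      (by simp) with hWrdef
  -- invariance
  have hinv : ∀ r (hr : 0 < r), r ≤ ρ₀ → μ (Wr r hr) = μ w := by
    intro r hr hrρ
    have hkill : μ (w - Wr r hr) = 0 := by
      refine mid_kill hpq hseg hg hμF hμn hμg (w - Wr r hr) (Λ * ρ₀)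
        (min (r/2) (7 * dist p q / 8)) (by positivity) ?_ ?_
      · intro z
        have hval : (w - Wr r hr) z = w z * (1 - bmp c r z) := by
          rw [Lip0.coe_sub]
          show w z - w z * bmp c r z = _
          ring
        rw [hval, abs_mul]
        have h1 : |1 - bmp c r z| ≤ 1 := by
          rw [abs_le]
          constructor
          · linarith [bmp_le_one c r z]
          · linarith [bmp_nonneg c r z]
        calc |w z| * |1 - bmp c r z| ≤ (Λ * ρ₀) * 1 :=
              mul_le_mul (hwbnd z) h1 (abs_nonneg _) (by positivity)
          _ = Λ * ρ₀ := mul_one _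
      · intro z hz
        have hval : (w - Wr r hr) z = w z * (1 - bmp c r z) := by
          rw [Lip0.coe_sub]
          show w z - w z * bmp c r z = _
          ring
        rw [hval] at hz
        have hwz : w z ≠ 0 := fun h0 => hz (by rw [h0, zero_mul])
        have hbz : bmp c r z ≠ 1 := by
          intro h1
          exact hz (by rw [h1]; ring)
        have hzc : r/2 < dist z c := by
          by_contra h2
          exact hbz (bmp_eq_one hr (le_of_not_gt h2))
        have hzc' : dist z c ≤ ρ₀ := hsupp z hwz
        -- distances to p and q
        have htr := dist_le_D p q z
        rcases hc with hcp | hcq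
        · constructor
          · refine le_trans (min_le_left _ _) ?_
            rw [hcp] at hzc
            exact le_of_lt hzc
          · refine le_trans (min_le_right _ _) ?_
            rw [hcp] at hzc'
            rw [hρ₀def] at hzc'
            linarith
        · constructor
          · refine le_trans (min_le_right _ _) ?_
            rw [hcq] at hzc'
            rw [hρ₀def] at hzc'
            linarith
          · refine le_trans (min_le_left _ _) ?_
            rw [hcq] at hzc
            exact le_of_lt hzc
    have h2 := map_sub μ w (Wr r hr)
    rw [hkill] at h2
    linarith [h2.symm]
  -- conclusion via approximants
  have key : ∀ ε : ℝ, 0 < ε → |μ w| ≤ ε * (2*Λ + ‖w‖) := by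
    intro ε hε
    obtain ⟨s, cf, hcf⟩ := freespace_approx hμF hε
    obtain ⟨r₁, hr₁, hr₁s⟩ := finset_pos_dist s c
    set r : ℝ := min (r₁/2) ρ₀ with hrdef
    have hr : 0 < r := lt_min (by positivity) hρ₀
    have hsum : ∑ z ∈ s, cf z * (Wr r hr) z = 0 := by
      refine Finset.sum_eq_zero fun z hz => ?_
      show cf z * (w z * bmp c r z) = 0
      by_cases hzc : dist z c = 0
      · have : z = c := by rwa [dist_eq_zero] at hzc
        rw [this, hwc, zero_mul, mul_zero]
      · have h1 : r ≤ dist z c := by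
          refine le_trans ?_ (hr₁s z hz hzc)
          calc r ≤ r₁/2 := min_le_left _ _
            _ ≤ r₁ := by linarith
        rw [bmp_eq_zero hr h1, mul_zero, mul_zero]
    have h1 := hcf (Wr r hr)
    rw [hsum, sub_zero] at h1
    have h2 : ‖Wr r hr‖ ≤ 2*Λ + ‖w‖ := lip0_norm_le _ hKnn (hWlip r hr)
    rw [hinv r hr (min_le_right _ _)] at h1
    exact le_trans h1 (mul_le_mul_of_nonneg_left h2 (le_of_lt hε))
  exact eq_zero_of_forall_eps hKnn key

end Stmt14Near

section Stmt14Ker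

open NormedSpace

variable {M : Type*} [MetricSpace M] {o p q : M}

lemma abs_clampC_le_abs {a C : ℝ} (hC : 0 ≤ C) : |max (min a C) (-C)| ≤ |a| := by
  rcases le_total a (-C) with h1 | h1
  · have hm : min a C = a := min_eq_left (by linarith)
    rw [hm, max_eq_right h1, abs_neg, abs_of_nonneg hC]
    calc C ≤ -a := by linarith
      _ ≤ |a| := neg_le_abs a
  · rcases le_total a C with h2 | h2
    · rw [min_eq_left h2, max_eq_left h1]
    · rw [min_eq_right h2, max_eq_left (by linarith)]
      rw [abs_of_nonneg hC]
      calc C ≤ a := h2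
        _ ≤ |a| := le_abs_self a

lemma abs_clampC_le_C {a C : ℝ} (hC : 0 ≤ C) : |max (min a C) (-C)| ≤ C := by
  rw [abs_le]
  constructor
  · exact le_max_right _ _
  · exact max_le (min_le_right _ _) (by linarith)

lemma clampC_eq_self {a C : ℝ} (h : |a| ≤ C) : max (min a C) (-C) = a := by
  rw [abs_le] at h
  rw [min_eq_left h.2, max_eq_left h.1]

lemma ker_kill [CompleteSpace M] {g : Lip0 M o} {μ : StrongDual ℝ (Lip0 M o)}
    (hpq : p ≠ q) (hseg : {z : M | dist p q = dist z p + dist z q} = {p, q})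
    (hg : ∀ t, g t = magicFun o p q t)
    (hμF : μ ∈ FreeSpace M o) (hμn : ‖μ‖ ≤ 1) (hμg : μ g = 1)
    (f : Lip0 M o) (hfp : f p = 0) (hfq : f q = 0) : μ f = 0 := by
  classical
  have hd0 : (0:ℝ) < dist p q := dist_pos.2 hpq
  set Λ : ℝ := ‖f‖ with hΛdef
  have hΛ0 : 0 ≤ Λ := norm_nonneg f
  have hdomp : ∀ z, |f z| ≤ Λ * dist z p := fun z => by
    have := f.norm_apply_le z p
    rwa [hfp, sub_zero] at this
  have hdomq : ∀ z, |f z| ≤ Λ * dist z q := fun z => by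
    have := f.norm_apply_le z q
    rwa [hfq, sub_zero] at this
  set C₁ : ℝ := Λ * (2 * dist p q) with hC₁def
  have hC₁ : 0 ≤ C₁ := by positivity
  set Tf : M → ℝ := fun z => max (min (f z) C₁) (-C₁) with hTfdef
  have hTlip : ∀ x y, |Tf x - Tf y| ≤ Λ * dist x y := by
    intro x y
    refine le_trans (le_trans (abs_max_sub_max_c _ _ _) (abs_min_sub_min_c _ _ _)) ?_
    exact f.norm_apply_le x y
  have hTbase : Tf o = 0 := by
    show max (min (f o) C₁) (-C₁) = 0
    rw [Lip0.map_base, min_eq_left hC₁, max_eq_left (by linarith)]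
  set T : Lip0 M o := Lip0.ofFun o Tf Λ hΛ0 hTlip hTbase with hTdef
  have hTeq : ∀ z, |f z| ≤ C₁ → T z = f z := fun z hz => clampC_eq_self hz
  have hTabs : ∀ z, |T z| ≤ |f z| := fun z => abs_clampC_le_abs hC₁
  have hTC : ∀ z, |T z| ≤ C₁ := fun z => abs_clampC_le_C hC₁
  -- the remainder vanishes near the segment
  have hRkill : μ (f - T) = 0 := by
    refine kill_of_vanish hpq hg hμn hμg hd0 (f - T) fun z hz => ?_
    have h1 : dist z p ≤ 2 * dist p q := by
      unfold Ee at hz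
      have := dist_nonneg (x := z) (y := q)
      linarith
    have h2 : |f z| ≤ C₁ := by
      refine le_trans (hdomp z) ?_
      rw [hC₁def]
      exact mul_le_mul_of_nonneg_left h1 hΛ0
    rw [Lip0.coe_sub]
    show f z - T z = 0
    rw [hTeq z h2]
    ring
  have hμfT : μ f = μ T := by
    have h := map_sub μ f T
    rw [hRkill] at h
    linarith [h.symm]
  -- bump decomposition
  set ρ : ℝ := dist p q / 8 with hρdef
  have hρ : 0 < ρ := by positivity
  have hbq0 : ∀ z, dist z p < ρ → bmp q ρ z = 0 := by
    intro z hzp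
    refine bmp_eq_zero hρ ?_
    have := dist_le_D p q z
    rw [hρdef] at hzp ⊢
    linarith
  have hbp0 : ∀ z, dist z q < ρ → bmp p ρ z = 0 := by
    intro z hzq
    refine bmp_eq_zero hρ ?_
    have := dist_le_D p q z
    rw [hρdef] at hzq ⊢
    linarith
  set uf : M → ℝ := fun z => 1 - bmp p ρ z - bmp q ρ z with hufdef
  have hu01 : ∀ z, 0 ≤ uf z ∧ uf z ≤ 1 := by
    intro z
    constructor
    · by_cases hz : bmp p ρ z = 0
      · show 0 ≤ 1 - bmp p ρ z - bmp q ρ z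
        rw [hz]
        have := bmp_le_one q ρ z
        linarith
      · have h1 : dist z p < ρ := bmp_pos_dist hρ hz
        show 0 ≤ 1 - bmp p ρ z - bmp q ρ z
        rw [hbq0 z h1]
        have := bmp_le_one p ρ z
        linarith
    · show 1 - bmp p ρ z - bmp q ρ z ≤ 1
      have := bmp_nonneg p ρ z
      have := bmp_nonneg q ρ z
      linarith
  have huabs : ∀ z, |uf z| ≤ 1 := fun z => by
    rw [abs_le]
    exact ⟨by linarith [(hu01 z).1], (hu01 z).2⟩
  have hulip : ∀ x y, |uf x - uf y| ≤ (4/ρ) * dist x y := by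
    intro x y
    have h1 := bmp_lip (c := p) hρ x y
    have h2 := bmp_lip (c := q) hρ x y
    have he : uf x - uf y = -(bmp p ρ x - bmp p ρ y) - (bmp q ρ x - bmp q ρ y) := by
      rw [hufdef]
      ring
    rw [he]
    calc |(-(bmp p ρ x - bmp p ρ y)) - (bmp q ρ x - bmp q ρ y)|
        ≤ |(-(bmp p ρ x - bmp p ρ y))| + |bmp q ρ x - bmp q ρ y| := abs_sub _ _
      _ ≤ 2/ρ * dist x y + 2/ρ * dist x y := by rw [abs_neg]; exact add_le_add h1 h2
      _ = 4/ρ * dist x y := by ring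
  -- three pieces
  have hKp : (0:ℝ) ≤ C₁ * (2/ρ) + 1 * Λ := by positivity
  have hKm : (0:ℝ) ≤ C₁ * (4/ρ) + 1 * Λ := by positivity
  set wp : Lip0 M o := Lip0.ofFun o (fun z => T z * bmp p ρ z) (C₁ * (2/ρ) + 1 * Λ) hKp
    (prod_lip hC₁ zero_le_one hΛ0 (by positivity) (fun z _ => hTC z)
      (fun z => by rw [abs_of_nonneg (bmp_nonneg p ρ z)]; exact bmp_le_one p ρ z)
      hTlip (fun x y => bmp_lip hρ x y)) (by simp [hTbase]) with hwpdef
  set wq : Lip0 M o := Lip0.ofFun o (fun z => T z * bmp q ρ z) (C₁ * (2/ρ) + 1 * Λ) hKp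
    (prod_lip hC₁ zero_le_one hΛ0 (by positivity) (fun z _ => hTC z)
      (fun z => by rw [abs_of_nonneg (bmp_nonneg q ρ z)]; exact bmp_le_one q ρ z)
      hTlip (fun x y => bmp_lip hρ x y)) (by simp [hTbase]) with hwqdef
  set wm : Lip0 M o := Lip0.ofFun o (fun z => T z * uf z) (C₁ * (4/ρ) + 1 * Λ) hKm
    (prod_lip hC₁ zero_le_one hΛ0 (by positivity) (fun z _ => hTC z)
      huabs hTlip hulip) (by simp [hTbase]) with hwmdef
  have hsplitT : T = wp + wq + wm := by
    refine DFunLike.ext _ _ fun z => ?_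
    show T z = T z * bmp p ρ z + T z * bmp q ρ z + T z * uf z
    rw [hufdef]
    ring
  -- kill each piece
  have hwp0 : μ wp = 0 := by
    refine near_point_kill hpq hseg hg hμF hμn hμg p (Or.inl rfl) wp Λ hΛ0 ?_ ?_
    · intro z
      show |T z * bmp p ρ z| ≤ Λ * dist z p
      rw [abs_mul]
      calc |T z| * |bmp p ρ z| ≤ (Λ * dist z p) * 1 := by
            refine mul_le_mul (le_trans (hTabs z) (hdomp z)) ?_ (abs_nonneg _) (by positivity)
            rw [abs_of_nonneg (bmp_nonneg p ρ z)]
            exact bmp_le_one p ρ z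
        _ = Λ * dist z p := mul_one _
    · intro z hz
      have hb : bmp p ρ z ≠ 0 := by
        intro h0
        exact hz (show T z * bmp p ρ z = 0 by rw [h0, mul_zero])
      have := bmp_pos_dist hρ hb
      rw [hρdef] at this
      linarith
  have hwq0 : μ wq = 0 := by
    refine near_point_kill hpq hseg hg hμF hμn hμg q (Or.inr rfl) wq Λ hΛ0 ?_ ?_
    · intro z
      show |T z * bmp q ρ z| ≤ Λ * dist z q
      rw [abs_mul]
      calc |T z| * |bmp q ρ z| ≤ (Λ * dist z q) * 1 := by
            refine mul_le_mul (le_trans (hTabs z) (hdomq z)) ?_ (abs_nonneg _) (by positivity)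
            rw [abs_of_nonneg (bmp_nonneg q ρ z)]
            exact bmp_le_one q ρ z
        _ = Λ * dist z q := mul_one _
    · intro z hz
      have hb : bmp q ρ z ≠ 0 := by
        intro h0
        exact hz (show T z * bmp q ρ z = 0 by rw [h0, mul_zero])
      have := bmp_pos_dist hρ hb
      rw [hρdef] at this
      linarith
  have hwm0 : μ wm = 0 := by
    refine mid_kill hpq hseg hg hμF hμn hμg wm C₁ (ρ/2) (by positivity) ?_ ?_
    · intro z
      show |T z * uf z| ≤ C₁
      rw [abs_mul]
      calc |T z| * |uf z| ≤ C₁ * 1 := mul_le_mul (hTC z) (huabs z) (abs_nonneg _) hC₁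
        _ = C₁ := mul_one _
    · intro z hz
      have hu : uf z ≠ 0 := by
        intro h0
        exact hz (show T z * uf z = 0 by rw [h0, mul_zero])
      constructor
      · by_contra h2
        push_neg at h2
        have h3 : bmp p ρ z = 1 := bmp_eq_one hρ (by linarith)
        have h4 : bmp q ρ z = 0 := hbq0 z (by linarith [half_lt_self hρ])
        exact hu (by rw [hufdef]; show 1 - bmp p ρ z - bmp q ρ z = 0; rw [h3, h4]; ring)
      · by_contra h2
        push_neg at h2
        have h3 : bmp q ρ z = 1 := bmp_eq_one hρ (by linarith)
        have h4 : bmp p ρ z = 0 := hbp0 z (by linarith [half_lt_self hρ])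
        exact hu (by rw [hufdef]; show 1 - bmp p ρ z - bmp q ρ z = 0; rw [h3, h4]; ring)
  rw [hμfT, hsplitT, map_add, map_add, hwp0, hwq0, hwm0]
  ring

end Stmt14Ker

section Stmt14End

open NormedSpace

variable {M : Type*} [MetricSpace M] {o p q : M}

lemma g_p_val {g : Lip0 M o} (hpq : p ≠ q) (hg : ∀ t, g t = magicFun o p q t) :
    g p = dist p q * dist o p / (dist o p + dist o q) := by
  have hDo := D_pos hpq o
  have hd0 : (0:ℝ) < dist p q := dist_pos.2 hpq
  rw [hg p]
  unfold magicFun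
  rw [dist_self]
  have h2 : dist o q + dist o p ≠ 0 := by linarith
  have h3 : dist o p + dist o q ≠ 0 := by linarith
  field_simp
  ring

lemma mu_eq_molecule [CompleteSpace M] {g : Lip0 M o} {μ : StrongDual ℝ (Lip0 M o)}
    (hpq : p ≠ q) (hseg : {z : M | dist p q = dist z p + dist z q} = {p, q})
    (hg : ∀ t, g t = magicFun o p q t)
    (hμF : μ ∈ FreeSpace M o) (hμn : ‖μ‖ ≤ 1) (hμg : μ g = 1) :
    μ = molecule o p q := by
  classical
  have hd0 : (0:ℝ) < dist p q := dist_pos.2 hpq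
  refine ContinuousLinearMap.ext fun F => ?_
  rw [molecule_apply]
  by_cases hop : o = p
  · subst hop
    have hgq : g q = -(dist o q) := by
      have h1 := g_pq hpq hg
      have h2 : g o = 0 := Lip0.map_base g
      linarith
    set a : ℝ := (F o - F q) / dist o q with hadef
    have hFo : F o = 0 := Lip0.map_base F
    have hF₀ : μ (F - a • g) = 0 := by
      refine ker_kill hpq hseg hg hμF hμn hμg (F - a • g) ?_ ?_
      · simp only [Lip0.coe_sub, Lip0.coe_smul]
        rw [hFo, Lip0.map_base g]
        ring
      · simp only [Lip0.coe_sub, Lip0.coe_smul]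
        rw [hgq, hadef, hFo]
        field_simp
        ring
    have h3 : μ (a • g) = a * μ g := by rw [map_smul, smul_eq_mul]
    have h2 := map_sub μ F (a • g)
    rw [hF₀, h3, hμg, mul_one] at h2
    have h4 : μ F = a := by linarith [h2.symm]
    rw [h4, hadef, div_eq_inv_mul]
  by_cases hoq : o = q
  · subst hoq
    have hgp : g p = dist p o := by
      have h1 := g_pq hpq hg
      have h2 : g o = 0 := Lip0.map_base g
      linarith
    set a : ℝ := (F p - F o) / dist p o with hadef
    have hFo : F o = 0 := Lip0.map_base F
    have hF₀ : μ (F - a • g) = 0 := by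
      refine ker_kill hpq hseg hg hμF hμn hμg (F - a • g) ?_ ?_
      · simp only [Lip0.coe_sub, Lip0.coe_smul]
        rw [hgp, hadef, hFo]
        field_simp
        ring
      · simp only [Lip0.coe_sub, Lip0.coe_smul]
        rw [hFo, Lip0.map_base g]
        ring
    have h3 : μ (a • g) = a * μ g := by rw [map_smul, smul_eq_mul]
    have h2 := map_sub μ F (a • g)
    rw [hF₀, h3, hμg, mul_one] at h2
    have h4 : μ F = a := by linarith [h2.symm]
    rw [h4, hadef, div_eq_inv_mul]
  · -- main case : o ∉ {p,q}
    have hdop : (0:ℝ) < dist o p := dist_pos.2 hop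
    have hdoq : (0:ℝ) < dist o q := dist_pos.2 hoq
    have hDo := D_pos hpq o
    have hEo : 0 < Ee p q o := by
      rcases lt_or_eq_of_le (Ee_nonneg p q o) with h | h
      · exact h
      · exfalso
        rcases Ee_eq_zero_iff hseg h.symm with h' | h'
        · exact hop h'
        · exact hoq h'
    set rs : ℝ := min (min (dist o p) (dist o q)) (dist p q) / 2 with hrsdef
    have hmin : 0 < min (min (dist o p) (dist o q)) (dist p q) :=
      lt_min (lt_min hdop hdoq) hd0
    have hrs : 0 < rs := by rw [hrsdef]; linarith
    have hrsop : rs ≤ dist o p := by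
      have h1 : min (min (dist o p) (dist o q)) (dist p q) ≤ dist o p :=
        le_trans (min_le_left _ _) (min_le_left _ _)
      rw [hrsdef]; linarith
    have hrsoq : rs ≤ dist o q := by
      have h1 : min (min (dist o p) (dist o q)) (dist p q) ≤ dist o q :=
        le_trans (min_le_left _ _) (min_le_right _ _)
      rw [hrsdef]; linarith
    have hrspq : rs ≤ dist p q := by
      have h1 := min_le_right (min (dist o p) (dist o q)) (dist p q)
      rw [hrsdef]; linarith
    -- fstar
    set fsf : M → ℝ := fun z => bmp p rs z + bmp q rs z with hfsfdef
    have hfslip : ∀ x y, |fsf x - fsf y| ≤ (4/rs) * dist x y := by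
      intro x y
      have h1 := bmp_lip (c := p) hrs x y
      have h2 := bmp_lip (c := q) hrs x y
      have he : fsf x - fsf y = (bmp p rs x - bmp p rs y) + (bmp q rs x - bmp q rs y) := by
        rw [hfsfdef]; ring
      rw [he]
      calc |(bmp p rs x - bmp p rs y) + (bmp q rs x - bmp q rs y)|
          ≤ |bmp p rs x - bmp p rs y| + |bmp q rs x - bmp q rs y| := abs_add_le _ _
        _ ≤ 2/rs * dist x y + 2/rs * dist x y := add_le_add h1 h2
        _ = 4/rs * dist x y := by ring
    have hfsbase : fsf o = 0 := by
      show bmp p rs o + bmp q rs o = 0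
      rw [bmp_eq_zero hrs hrsop, bmp_eq_zero hrs hrsoq]
      ring
    set fstar : Lip0 M o := Lip0.ofFun o fsf (4/rs) (by positivity) hfslip hfsbase
      with hfstardef
    have hfsp : fsf p = 1 := by
      show bmp p rs p + bmp q rs p = 1
      rw [bmp_self hrs, bmp_eq_zero hrs hrspq]
      ring
    have hfsq : fsf q = 1 := by
      show bmp p rs q + bmp q rs q = 1
      rw [bmp_self hrs, bmp_eq_zero hrs (by rwa [dist_comm])]
      ring
    set s : ℝ := μ fstar with hsdef
    have hgp := g_p_val hpq hg
    have hgq : g q = g p - dist p q := by linarith [g_pq hpq hg]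
    -- generic evaluation lemma
    have heval : ∀ (h : Lip0 M o) (c : ℝ), h p - g p - c * fsf p = 0 →
        h q - g q - c * fsf q = 0 → μ h = 1 + c * s := by
      intro h c hp' hq'
      have hF : μ (h - g - c • fstar) = 0 := by
        refine ker_kill hpq hseg hg hμF hμn hμg (h - g - c • fstar) ?_ ?_
        · simp only [Lip0.coe_sub, Lip0.coe_smul]
          show h p - g p - c * fstar p = 0
          exact hp'
        · simp only [Lip0.coe_sub, Lip0.coe_smul]
          show h q - g q - c * fstar q = 0
          exact hq'
      have h1 := map_sub μ (h - g) (c • fstar)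
      have h2 := map_sub μ h g
      have h3 : μ (c • fstar) = c * s := by rw [map_smul, smul_eq_mul, hsdef]
      rw [hF, h2, h3, hμg] at h1
      linarith [h1.symm]
    -- first test function
    have h₁lip : ∀ x y : M, |(dist o p - dist x p) - (dist o p - dist y p)| ≤ 1 * dist x y := by
      intro x y
      rw [one_mul]
      have he : (dist o p - dist x p) - (dist o p - dist y p) = -(dist x p - dist y p) := by
        ring
      rw [he, abs_neg]
      exact abs_dist_sub_le x y p
    set h₁ : Lip0 M o := Lip0.ofFun o (fun z => dist o p - dist z p) 1 zero_le_one h₁lip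
      (by simp) with h₁def
    have hc₁ : dist o p - g p = dist o p * Ee p q o / (dist o p + dist o q) := by
      rw [hgp]
      unfold Ee
      field_simp
    have hc₁pos : 0 < dist o p - g p := by
      rw [hc₁]
      positivity
    have hμ₁ : μ h₁ = 1 + (dist o p - g p) * s := by
      refine heval h₁ (dist o p - g p) ?_ ?_
      · show (dist o p - dist p p) - g p - (dist o p - g p) * fsf p = 0
        rw [dist_self, hfsp]
        ring
      · show (dist o p - dist q p) - g q - (dist o p - g p) * fsf q = 0
        rw [hfsq, hgq, dist_comm q p]
        ring
    have h₁bnd : μ h₁ ≤ 1 :=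
      le_trans (le_abs_self _) (le_trans (mu_abs_le hμn h₁)
        (lip0_norm_le h₁ zero_le_one h₁lip))
    have hsle : s ≤ 0 := by nlinarith
    -- second test function
    have h₂lip : ∀ x y : M, |(dist x q - dist o q) - (dist y q - dist o q)| ≤ 1 * dist x y := by
      intro x y
      rw [one_mul]
      have he : (dist x q - dist o q) - (dist y q - dist o q) = dist x q - dist y q := by
        ring
      rw [he]
      exact abs_dist_sub_le x y q
    set h₂ : Lip0 M o := Lip0.ofFun o (fun z => dist z q - dist o q) 1 zero_le_one h₂lip
      (by simp) with h₂def
    have hc₂ : dist p q - dist o q - g p = -(dist o q * Ee p q o / (dist o p + dist o q)) := by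
      rw [hgp]
      unfold Ee
      field_simp
      ring
    have hc₂neg : dist p q - dist o q - g p < 0 := by
      rw [hc₂]
      have hq2 : 0 < dist o q * Ee p q o / (dist o p + dist o q) := by positivity
      linarith
    have hμ₂ : μ h₂ = 1 + (dist p q - dist o q - g p) * s := by
      refine heval h₂ (dist p q - dist o q - g p) ?_ ?_
      · show (dist p q - dist o q) - g p - (dist p q - dist o q - g p) * fsf p = 0
        rw [hfsp]
        ring
      · show (dist q q - dist o q) - g q - (dist p q - dist o q - g p) * fsf q = 0
        rw [dist_self, hfsq, hgq]
        ring
    have h₂bnd : μ h₂ ≤ 1 :=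
      le_trans (le_abs_self _) (le_trans (mu_abs_le hμn h₂)
        (lip0_norm_le h₂ zero_le_one h₂lip))
    have hsge : 0 ≤ s := by nlinarith
    have hs0 : s = 0 := le_antisymm hsle hsge
    -- general functional
    set a : ℝ := (F p - F q) / dist p q with hadef
    set cc : ℝ := F p - a * g p with hccdef
    have hF₀ : μ (F - a • g - cc • fstar) = 0 := by
      refine ker_kill hpq hseg hg hμF hμn hμg _ ?_ ?_
      · simp only [Lip0.coe_sub, Lip0.coe_smul]
        show F p - a * g p - cc * fstar p = 0
        have : (fstar p : ℝ) = 1 := hfsp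
        rw [this, hccdef]
        ring
      · simp only [Lip0.coe_sub, Lip0.coe_smul]
        show F q - a * g q - cc * fstar q = 0
        have h5 : (fstar q : ℝ) = 1 := hfsq
        have h6 : a * dist p q = F p - F q := by
          rw [hadef]
          field_simp
        rw [h5, hccdef, hgq]
        linarith [h6]
    have h1 := map_sub μ (F - a • g) (cc • fstar)
    have h2 := map_sub μ F (a • g)
    have h3 : μ (cc • fstar) = cc * s := by rw [map_smul, smul_eq_mul, hsdef]
    have h4 : μ (a • g) = a * μ g := by rw [map_smul, smul_eq_mul]
    rw [hF₀, h2, h3, h4, hμg, mul_one, hs0, mul_zero, sub_zero] at h1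
    have h7 : μ F = a := by linarith [h1.symm]
    rw [h7, hadef, div_eq_inv_mul]

end Stmt14End

/-- Main theorem: if `M` is complete and `[p,q] = {p,q}`, then the molecule `m_{pq}` is an
exposed point of the unit ball of `F(M)`, exposed by the magic function `f_{pq}`: the
magic function has Lipschitz norm `1`, pairs to `1` with `m_{pq}`, and pairs to strictly
less than `1` with every other element of the closed unit ball of `F(M)`. -/
theorem stmt_14 {M : Type*} [MetricSpace M] [CompleteSpace M] (o p q : M) (hpq : p ≠ q)
    (hseg : {z : M | dist p q = dist z p + dist z q} = {p, q})
    (g : Lip0 M o) (hg : ∀ t, g t = magicFun o p q t) :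
    ‖g‖ = 1 ∧ molecule o p q g = 1 ∧
      ∀ μ : StrongDual ℝ (Lip0 M o), μ ∈ FreeSpace M o → ‖μ‖ ≤ 1 →
        μ ≠ molecule o p q → μ g < 1 := by
  refine ⟨norm_g_eq_one hpq hg, molecule_pairs_one hpq hg, ?_⟩
  intro μ hμF hμn hμne
  have hle : μ g ≤ 1 := by
    have h1 := mu_abs_le hμn g
    rw [norm_g_eq_one hpq hg] at h1
    exact le_trans (le_abs_self _) h1
  rcases lt_or_eq_of_le hle with h | h
  · exact h
  · exact absurd (mu_eq_molecule hpq hseg hg hμF hμn h) hμne
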